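/- Every split metacyclic finite group G of even order has a cyclic normal subgroup N and a cyclic subgroup H of even order with N ∩ H = {1} and NH = G. -/

import Mathlib

open Subgroup Pointwise

private lemma aux_isCyclic_zpowers {G : Type*} [Group G] (g : G) :
    IsCyclic (Subgroup.zpowers g) := by
  refine ⟨⟨⟨g, Subgroup.mem_zpowers g⟩, ?_⟩⟩
  rintro ⟨x, hx⟩
  obtain ⟨n, rfl⟩ := hx
  exact ⟨n, by ext; simp⟩

private lemma aux_exists_zpowers_eq {G : Type*} [Group G] (K : Subgroup G)
    (h : IsCyclic K) : ∃ g ∈ K, Subgroup.zpowers g = K := by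
  obtain ⟨⟨g, hg⟩, hgen⟩ := h.exists_generator
  refine ⟨g, hg, le_antisymm (by simpa [Subgroup.zpowers_le] using hg) ?_⟩
  intro x hx
  obtain ⟨n, hn⟩ := hgen ⟨x, hx⟩
  exact ⟨n, by simpa [Subtype.ext_iff] using hn⟩

private lemma aux_conjz {G : Type*} [Group G] (x b : G) (z : ℤ) :
    (x * b * x⁻¹) ^ z = x * b ^ z * x⁻¹ := by
  have := map_zpow (MulAut.conj x) b z
  simpa [MulAut.conj_apply] using this.symm

private lemma aux_bez (a b : ℕ) (h : Nat.Coprime a b) :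
    ∃ u v : ℤ, u * (a : ℤ) + v * (b : ℤ) = 1 := by
  refine ⟨Nat.gcdA a b, Nat.gcdB a b, ?_⟩
  have := Nat.gcd_eq_gcd_ab a b
  rw [h] at this
  push_cast at this
  linarith

/-- Every split metacyclic finite group of even order has a cyclic normal
subgroup `N` and a cyclic subgroup `H` of even order with `N ∩ H = 1` and
`NH = G`. -/
theorem split_metacyclic_even_order_has_even_complement (G : Type*) [Group G] [Finite G]
    (hEven : Even (Nat.card G))
    (hMeta : ∃ (N H : Subgroup G), N.Normal ∧ IsCyclic N ∧ IsCyclic H ∧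
      N ⊓ H = ⊥ ∧ N ⊔ H = ⊤) :
    ∃ (N H : Subgroup G), N.Normal ∧ IsCyclic N ∧ IsCyclic H ∧
      Even (Nat.card H) ∧ N ⊓ H = ⊥ ∧ N ⊔ H = ⊤ := by
  obtain ⟨N, H, hNnorm, hNcyc, hHcyc, hinf, hsup⟩ := hMeta
  by_cases hHe : Even (Nat.card H)
  · exact ⟨N, H, hNnorm, hNcyc, hHcyc, hHe, hinf, hsup⟩
  have he : Odd (Nat.card H) := Nat.odd_iff.mpr (Nat.not_even_iff.mp hHe)
  set e := Nat.card H with he_def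
  -- `G = N H` with trivial intersection, so orders multiply
  have hcompl : Subgroup.IsComplement' N H := by
    apply Subgroup.isComplement'_of_disjoint_and_mul_eq_univ (disjoint_iff.mpr hinf)
    have := Subgroup.normal_mul N H
    rw [hsup] at this
    rw [← this]; rfl
  have hcard : Nat.card N * e = Nat.card G := hcompl.card_mul
  -- generator of N
  obtain ⟨g, hgN, hgEq⟩ := aux_exists_zpowers_eq N hNcyc
  set n := orderOf g with hn_def
  have hn_card : Nat.card N = n := by rw [← hgEq, Nat.card_zpowers]
  have hn0 : n ≠ 0 := by
    rw [← hn_card]; exact Nat.card_pos.ne'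
  have hnEven : 2 ∣ n := by
    have h2G : 2 ∣ Nat.card G := even_iff_two_dvd.mp hEven
    rw [← hcard, hn_card] at h2G
    exact (Nat.coprime_two_left.mpr he).dvd_of_dvd_mul_right h2G
  set k := n.factorization 2 with hk_def
  have hk1 : 0 < k := Nat.Prime.factorization_pos_of_dvd Nat.prime_two hn0 hnEven
  set m := n / 2 ^ k with hm_def
  have hmk : 2 ^ k * m = n := Nat.ordProj_mul_ordCompl_eq_self n 2
  have hm_odd : Odd m := Nat.odd_iff.mpr
    (Nat.two_dvd_ne_zero.mp (Nat.not_dvd_ordCompl Nat.prime_two hn0))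
  have hm0 : m ≠ 0 := fun h => hn0 (by rw [← hmk, h, mul_zero])
  have h2k0 : (2 : ℕ) ^ k ≠ 0 := pow_ne_zero k two_ne_zero
  set p0 := g ^ m with hp0_def
  set q0 := g ^ (2 ^ k) with hq0_def
  have hmdvd : m ∣ n := Dvd.intro_left _ hmk
  have h2kdvd : 2 ^ k ∣ n := Dvd.intro _ hmk
  have hp0 : orderOf p0 = 2 ^ k := by
    rw [hp0_def, orderOf_pow_of_dvd hm0 hmdvd, ← hn_def, ← hmk, mul_comm]
    exact Nat.mul_div_cancel_left _ (Nat.pos_of_ne_zero hm0)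
  have hq0 : orderOf q0 = m := by
    rw [hq0_def, orderOf_pow_of_dvd h2k0 h2kdvd]
  -- normality of power subgroups of N
  have hconj : ∀ x : G, ∃ s : ℤ, g ^ s = x * g * x⁻¹ := by
    intro x
    have : x * g * x⁻¹ ∈ N := hNnorm.conj_mem g hgN x
    rw [← hgEq] at this
    exact this
  have key : ∀ t : ℕ, (Subgroup.zpowers (g ^ t)).Normal := by
    intro t
    constructor
    rintro a ha x
    obtain ⟨i, rfl⟩ := ha
    obtain ⟨s, hs⟩ := hconj x
    refine ⟨s * i, ?_⟩
    have h1 : (g ^ t : G) = g ^ (t : ℤ) := (zpow_natCast g t).symm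
    have h2 := aux_conjz x g ((t : ℤ) * i)
    rw [← hs] at h2
    calc (g ^ t) ^ (s * i) = g ^ ((t : ℤ) * (s * i)) := by rw [h1, ← zpow_mul]
      _ = (g ^ s) ^ ((t : ℤ) * i) := by rw [← zpow_mul]; congr 1; ring
      _ = x * g ^ ((t : ℤ) * i) * x⁻¹ := h2
      _ = x * (g ^ t) ^ i * x⁻¹ := by rw [h1, ← zpow_mul]
  set P := Subgroup.zpowers p0 with hP_def
  set Q := Subgroup.zpowers q0 with hQ_def
  haveI hPnorm : P.Normal := key m
  haveI hQnorm : Q.Normal := key (2 ^ k)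
  have hPN : P ≤ N := by
    rw [← hgEq]
    exact Subgroup.zpowers_le.mpr (pow_mem (Subgroup.mem_zpowers g) m)
  have hQN : Q ≤ N := by
    rw [← hgEq]
    exact Subgroup.zpowers_le.mpr (pow_mem (Subgroup.mem_zpowers g) (2 ^ k))
  -- generator of H
  obtain ⟨y, hyH, hyEq⟩ := aux_exists_zpowers_eq H hHcyc
  have hye : orderOf y = e := by rw [he_def, ← hyEq, Nat.card_zpowers]
  -- conjugation of p0 by y
  obtain ⟨j, hj⟩ : ∃ j : ℤ, p0 ^ j = y * p0 * y⁻¹ :=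
    hPnorm.conj_mem p0 (Subgroup.mem_zpowers p0) y
  obtain ⟨j', hj'⟩ : ∃ j' : ℤ, p0 ^ j' = y⁻¹ * p0 * y := by
    have := hPnorm.conj_mem p0 (Subgroup.mem_zpowers p0) y⁻¹
    simp only [inv_inv] at this; exact this
  have hdvd_inv : ((2 : ℤ) ^ k) ∣ j' * j - 1 := by
    have h1 : p0 = y⁻¹ * (y * p0 * y⁻¹) * y := by group
    rw [← hj] at h1
    have h2 : y⁻¹ * p0 ^ j * y = (y⁻¹ * p0 * y) ^ j := by
      have := aux_conjz y⁻¹ p0 j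
      simpa using this.symm
    rw [h2, ← hj', ← zpow_mul] at h1
    have h3 : p0 ^ (j' * j - 1) = 1 := by
      rw [zpow_sub, ← h1, zpow_one, mul_inv_cancel]
    have h4 := orderOf_dvd_iff_zpow_eq_one.mpr h3
    rw [hp0] at h4
    exact_mod_cast h4
  -- iterated conjugation
  have hiter : ∀ t : ℕ, y ^ t * p0 * (y ^ t)⁻¹ = p0 ^ (j ^ t) := by
    intro t
    induction t with
    | zero => simp
    | succ t ih =>
      have h1 : y ^ (t + 1) * p0 * (y ^ (t + 1))⁻¹
          = y * (y ^ t * p0 * (y ^ t)⁻¹) * y⁻¹ := by group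
      rw [h1, ih]
      calc y * p0 ^ (j ^ t) * y⁻¹ = (y * p0 * y⁻¹) ^ (j ^ t) :=
            (aux_conjz y p0 (j ^ t)).symm
        _ = (p0 ^ j) ^ (j ^ t) := by rw [hj]
        _ = p0 ^ (j * j ^ t) := by rw [← zpow_mul]
        _ = p0 ^ (j ^ (t + 1)) := by congr 1; ring
  have hdvd_e : ((2 : ℤ) ^ k) ∣ j ^ e - 1 := by
    have hy1 : y ^ e = 1 := by rw [← hye]; exact pow_orderOf_eq_one y
    have h1 := hiter e
    rw [hy1] at h1
    simp only [one_mul, inv_one, mul_one] at h1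
    have h3 : p0 ^ (j ^ e - 1) = 1 := by
      rw [zpow_sub, ← h1, zpow_one, mul_inv_cancel]
    have h4 := orderOf_dvd_iff_zpow_eq_one.mpr h3
    rw [hp0] at h4
    exact_mod_cast h4
  -- pass to ZMod (2^k)
  haveI : NeZero ((2 : ℕ) ^ k) := ⟨h2k0⟩
  have castone : ∀ a : ℤ, ((2 : ℤ) ^ k ∣ a - 1) → ((a : ZMod (2 ^ k)) = 1) := by
    intro a ha
    have h0 : ((a - 1 : ℤ) : ZMod (2 ^ k)) = 0 :=
      (ZMod.intCast_zmod_eq_zero_iff_dvd _ _).mpr (by push_cast; exact ha)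
    push_cast at h0
    exact sub_eq_zero.mp h0
  have hj'j : ((j' : ZMod (2 ^ k)) * (j : ZMod (2 ^ k)) = 1) := by
    have := castone (j' * j) hdvd_inv
    push_cast at this
    exact this
  set U : (ZMod (2 ^ k))ˣ :=
    ⟨(j : ZMod (2 ^ k)), (j' : ZMod (2 ^ k)), by rw [mul_comm]; exact hj'j, hj'j⟩ with hU_def
  have hUe : U ^ e = 1 := by
    ext
    push_cast [hU_def]
    have := castone (j ^ e) hdvd_e
    push_cast at this
    exact this
  have hordU1 : orderOf U ∣ e := orderOf_dvd_of_pow_eq_one hUe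
  have hordU2 : orderOf U ∣ 2 ^ (k - 1) := by
    have h0 : orderOf U ∣ Fintype.card (ZMod (2 ^ k))ˣ := orderOf_dvd_card
    rw [ZMod.card_units_eq_totient,
      Nat.totient_prime_pow Nat.prime_two hk1] at h0
    simpa using h0
  have hcop : Nat.Coprime e (2 ^ (k - 1)) :=
    (Nat.coprime_two_right.mpr he).pow_right _
  have hU1 : U = 1 := by
    rw [← orderOf_eq_one_iff]
    have := Nat.dvd_gcd hordU1 hordU2
    rw [Nat.Coprime.gcd_eq_one hcop] at this
    exact Nat.dvd_one.mp this
  have hj1 : (j : ZMod (2 ^ k)) = 1 := by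
    have := congrArg Units.val hU1
    simpa [hU_def] using this
  have hdvd_j : ((2 : ℤ) ^ k) ∣ j - 1 := by
    have h0 : ((j - 1 : ℤ) : ZMod (2 ^ k)) = 0 := by push_cast [hj1]; ring
    have := (ZMod.intCast_zmod_eq_zero_iff_dvd (j - 1) (2 ^ k)).mp h0
    exact_mod_cast this
  -- p0 and y commute
  have hp0j : p0 ^ (j - 1) = 1 :=
    orderOf_dvd_iff_zpow_eq_one.mp (by rw [hp0]; exact_mod_cast hdvd_j)
  have hp0j' : p0 ^ j = p0 := by
    have h1 : p0 ^ j = p0 ^ ((1 : ℤ) + (j - 1)) := by congr 1; ring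
    rw [h1, zpow_add, zpow_one, hp0j, mul_one]
  have hconj_triv : y * p0 * y⁻¹ = p0 := by rw [← hj, hp0j']
  have hcomm : Commute p0 y := by
    have h1 : y * p0 = p0 * y := by
      have := hconj_triv
      calc y * p0 = (y * p0 * y⁻¹) * y := by group
        _ = p0 * y := by rw [this]
    exact h1.symm
  have hcoyp : Nat.Coprime (orderOf p0) (orderOf y) := by
    rw [hp0, hye]
    exact (Nat.coprime_two_left.mpr he).pow_left k
  set c := p0 * y with hc_def
  have hc : orderOf c = 2 ^ k * e := by
    rw [hc_def, hcomm.orderOf_mul_eq_mul_orderOf_of_coprime hcoyp, hp0, hye]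
  set H' := Subgroup.zpowers c with hH'_def
  -- even order
  have hH'even : Even (Nat.card H') := by
    rw [hH'_def, Nat.card_zpowers, hc]
    exact even_iff_two_dvd.mpr
      (dvd_mul_of_dvd_left (dvd_pow_self 2 hk1.ne') e)
  -- P ≤ H'
  have hce : c ^ e = p0 ^ e := by
    rw [hc_def, hcomm.mul_pow, ← hye, pow_orderOf_eq_one, mul_one]
  have hc2k : c ^ (2 ^ k) = y ^ (2 ^ k) := by
    rw [hc_def, hcomm.mul_pow, ← hp0, pow_orderOf_eq_one, one_mul]
  have hP_le : P ≤ H' := by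
    obtain ⟨u, v, huv⟩ := aux_bez e (2 ^ k) ((Nat.coprime_two_right.mpr he).pow_right k)
    have hp0mem : p0 = (c ^ e) ^ u := by
      rw [hce, ← zpow_natCast p0 e, ← zpow_mul]
      have h2 : p0 ^ ((2 ^ k : ℕ) : ℤ) = 1 := by
        rw [zpow_natCast, ← hp0, pow_orderOf_eq_one]
      calc p0 = p0 ^ (1 : ℤ) := (zpow_one _).symm
        _ = p0 ^ (u * (e : ℤ) + v * ((2 ^ k : ℕ) : ℤ)) := by rw [huv]
        _ = p0 ^ (u * (e : ℤ)) * p0 ^ (v * ((2 ^ k : ℕ) : ℤ)) := zpow_add _ _ _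
        _ = p0 ^ (u * (e : ℤ)) := by
            have h3 : p0 ^ (v * ((2 ^ k : ℕ) : ℤ)) = 1 := by
              rw [mul_comm, zpow_mul, h2, one_zpow]
            rw [h3, mul_one]
        _ = p0 ^ ((e : ℤ) * u) := by congr 1; ring
    rw [hP_def]
    apply Subgroup.zpowers_le.mpr
    rw [hp0mem]
    exact Subgroup.zpow_mem _ (pow_mem (Subgroup.mem_zpowers c) e) u
  have hH_le : H ≤ H' := by
    obtain ⟨u, v, huv⟩ := aux_bez (2 ^ k) e ((Nat.coprime_two_left.mpr he).pow_left k)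
    have hymem : y = (c ^ (2 ^ k)) ^ u := by
      rw [hc2k, ← zpow_natCast y (2 ^ k), ← zpow_mul]
      have h2 : y ^ ((e : ℕ) : ℤ) = 1 := by
        rw [zpow_natCast, ← hye, pow_orderOf_eq_one]
      calc y = y ^ (1 : ℤ) := (zpow_one _).symm
        _ = y ^ (u * ((2 ^ k : ℕ) : ℤ) + v * ((e : ℕ) : ℤ)) := by rw [huv]
        _ = y ^ (u * ((2 ^ k : ℕ) : ℤ)) * y ^ (v * ((e : ℕ) : ℤ)) := zpow_add _ _ _
        _ = y ^ (u * ((2 ^ k : ℕ) : ℤ)) := by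
            have h3 : y ^ (v * ((e : ℕ) : ℤ)) = 1 := by
              rw [mul_comm, zpow_mul, h2, one_zpow]
            rw [h3, mul_one]
        _ = y ^ (((2 ^ k : ℕ) : ℤ) * u) := by congr 1; ring
    rw [← hyEq]
    apply Subgroup.zpowers_le.mpr
    rw [hymem]
    exact Subgroup.zpow_mem _ (pow_mem (Subgroup.mem_zpowers c) (2 ^ k)) u
  have hH'_le : H' ≤ P ⊔ H := by
    apply Subgroup.zpowers_le.mpr
    exact mul_mem (le_sup_left (a := P) (b := H) (Subgroup.mem_zpowers p0))
      (le_sup_right (a := P) (b := H) (hyEq ▸ Subgroup.mem_zpowers y))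
  -- sup condition
  have hsup' : Q ⊔ H' = ⊤ := by
    have hg_mem : g ∈ Q ⊔ H' := by
      obtain ⟨u, v, huv⟩ := aux_bez (2 ^ k) m ((Nat.coprime_two_left.mpr hm_odd).pow_left k)
      have hgeq : g = q0 ^ u * p0 ^ v := by
        rw [hp0_def, hq0_def, ← zpow_natCast g (2 ^ k), ← zpow_natCast g m,
          ← zpow_mul, ← zpow_mul, ← zpow_add]
        calc g = g ^ (1 : ℤ) := (zpow_one _).symm
          _ = g ^ (((2 ^ k : ℕ) : ℤ) * u + ((m : ℕ) : ℤ) * v) := by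
              congr 1; rw [← huv]; ring
      rw [hgeq]
      exact mul_mem
        (Subgroup.mem_sup_left (Subgroup.zpow_mem _ (Subgroup.mem_zpowers q0) u))
        (Subgroup.mem_sup_right (hP_le (Subgroup.zpow_mem _ (Subgroup.mem_zpowers p0) v)))
    have hN_le : N ≤ Q ⊔ H' := by
      rw [← hgEq]
      exact Subgroup.zpowers_le.mpr hg_mem
    have : (⊤ : Subgroup G) ≤ Q ⊔ H' := by
      rw [← hsup]
      exact sup_le hN_le (hH_le.trans le_sup_right)
    exact top_le_iff.mp this
  -- inf condition
  have hinf' : Q ⊓ H' = ⊥ := by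
    rw [eq_bot_iff]
    intro x hx
    obtain ⟨hxQ, hxH'⟩ := Subgroup.mem_inf.mp hx
    have hxPH : x ∈ P ⊔ H := hH'_le hxH'
    have hxPH' : x ∈ ((P : Set G) * (H : Set G)) := by
      rw [← Subgroup.normal_mul P H]
      exact hxPH
    obtain ⟨p, hp, h, hh, rfl⟩ := hxPH'
    have hhN : h ∈ N := by
      have h1 : h = p⁻¹ * (p * h) := by group
      rw [h1]
      exact mul_mem (inv_mem (hPN hp)) (hQN hxQ)
    have hh1 : h = 1 := by
      have : h ∈ N ⊓ H := Subgroup.mem_inf.mpr ⟨hhN, hh⟩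
      rw [hinf] at this
      exact Subgroup.mem_bot.mp this
    subst hh1
    simp only [mul_one] at hxQ ⊢
    -- p ∈ P ⊓ Q, coprime orders
    have hdvd1 : orderOf p ∣ 2 ^ k := by
      obtain ⟨i, rfl⟩ := hp
      apply orderOf_dvd_of_pow_eq_one
      rw [← zpow_natCast (p0 ^ i) (2 ^ k), ← zpow_mul, mul_comm, zpow_mul,
        zpow_natCast, ← hp0, pow_orderOf_eq_one, one_zpow]
    have hdvd2 : orderOf p ∣ m := by
      obtain ⟨i, hi⟩ := hxQ
      apply orderOf_dvd_of_pow_eq_one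
      rw [← hi, ← zpow_natCast (q0 ^ i) m, ← zpow_mul, mul_comm, zpow_mul,
        zpow_natCast, ← hq0, pow_orderOf_eq_one, one_zpow]
    have hcopm : Nat.Coprime (2 ^ k) m := (Nat.coprime_two_left.mpr hm_odd).pow_left k
    have : orderOf p = 1 := Nat.dvd_one.mp (hcopm.gcd_eq_one ▸ Nat.dvd_gcd hdvd1 hdvd2)
    rw [Subgroup.mem_bot]
    exact orderOf_eq_one_iff.mp this
  exact ⟨Q, H', hQnorm, aux_isCyclic_zpowers q0, aux_isCyclic_zpowers c,
    hH'even, hinf', hsup'⟩
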